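/- Every periodic solution of the Kepler-Heisenberg system has zero dilational momentum: if c : ℝ → ℝ⁶ is a solution and there exists T > 0 with c(t + T) = c(t) for all t, then J(c(t)) = x(t)·p_x(t) + y(t)·p_y(t) + 2z(t)·p_z(t) = 0 for all t. -/

import Mathlib

set_option maxHeartbeats 1000000

/-- `P_X = p_x - (1/2) y p_z`, where phase space coordinates are
`(x, y, z, p_x, p_y, p_z) = (p 0, p 1, p 2, p 3, p 4, p 5)`. -/
noncomputable def PX (p : Fin 6 → ℝ) : ℝ := p 3 - (1/2) * p 1 * p 5

/-- `P_Y = p_y + (1/2) x p_z`. -/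
noncomputable def PY (p : Fin 6 → ℝ) : ℝ := p 4 + (1/2) * p 0 * p 5

/-- `Q = (x² + y²)² + 16 z²`. -/
noncomputable def Qf (p : Fin 6 → ℝ) : ℝ := ((p 0)^2 + (p 1)^2)^2 + 16 * (p 2)^2

/-- The Kepler–Heisenberg Hamiltonian `H = (1/2)(P_X² + P_Y²) - (1/(8π)) Q^{-1/2}`. -/
noncomputable def Ham (p : Fin 6 → ℝ) : ℝ :=
  (1/2) * ((PX p)^2 + (PY p)^2) - (1/(8*Real.pi)) * (Qf p) ^ (-(1/2) : ℝ)

/-- A solution of the Kepler–Heisenberg system: a differentiable curve on an open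
interval (open preconnected set) `I`, whose position component never vanishes, and
which satisfies Hamilton's equations for `Ham`. -/
def IsSolutionOn (c : ℝ → Fin 6 → ℝ) (I : Set ℝ) : Prop :=
  IsOpen I ∧ IsPreconnected I ∧
  ∀ t ∈ I,
    (¬ (c t 0 = 0 ∧ c t 1 = 0 ∧ c t 2 = 0)) ∧
    HasDerivAt (fun τ => c τ 0) (fderiv ℝ Ham (c t) (Pi.single 3 1)) t ∧
    HasDerivAt (fun τ => c τ 1) (fderiv ℝ Ham (c t) (Pi.single 4 1)) t ∧
    HasDerivAt (fun τ => c τ 2) (fderiv ℝ Ham (c t) (Pi.single 5 1)) t ∧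
    HasDerivAt (fun τ => c τ 3) (-(fderiv ℝ Ham (c t) (Pi.single 0 1))) t ∧
    HasDerivAt (fun τ => c τ 4) (-(fderiv ℝ Ham (c t) (Pi.single 1 1))) t ∧
    HasDerivAt (fun τ => c τ 5) (-(fderiv ℝ Ham (c t) (Pi.single 2 1))) t

/-- The dilational momentum `J = x p_x + y p_y + 2 z p_z`. -/
noncomputable def Jmom (p : Fin 6 → ℝ) : ℝ := p 0 * p 3 + p 1 * p 4 + 2 * p 2 * p 5

namespace KHaux

/-- `Q^{-3/2}` -/
noncomputable def rQ (p : Fin 6 → ℝ) : ℝ := (Qf p) ^ (-(1/2) - 1 : ℝ)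

/-- `∂H/∂x` -/
noncomputable def DX (p : Fin 6 → ℝ) : ℝ :=
  PY p * (p 5 / 2) + (p 0 * ((p 0)^2 + (p 1)^2) / (4*Real.pi)) * rQ p

/-- `∂H/∂y` -/
noncomputable def DY (p : Fin 6 → ℝ) : ℝ :=
  -(PX p * (p 5 / 2)) + (p 1 * ((p 0)^2 + (p 1)^2) / (4*Real.pi)) * rQ p

/-- `∂H/∂z` -/
noncomputable def DZ (p : Fin 6 → ℝ) : ℝ := (2 * p 2 / Real.pi) * rQ p

lemma qf_pos {p : Fin 6 → ℝ} (h : ¬ (p 0 = 0 ∧ p 1 = 0 ∧ p 2 = 0)) : 0 < Qf p := by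
  have key : ∀ a : ℝ, a ≠ 0 → 0 < a ^ 2 :=
    fun a ha => lt_of_le_of_ne (sq_nonneg a) (Ne.symm (pow_ne_zero 2 ha))
  rcases not_and_or.mp h with h0 | h12
  · have := key _ h0
    unfold Qf; nlinarith [sq_nonneg (p 1), sq_nonneg (p 2), sq_nonneg ((p 0)^2 + (p 1)^2)]
  rcases not_and_or.mp h12 with h1 | h2
  · have := key _ h1
    unfold Qf; nlinarith [sq_nonneg (p 0), sq_nonneg (p 2), sq_nonneg ((p 0)^2 + (p 1)^2)]
  · have := key _ h2
    unfold Qf; nlinarith [sq_nonneg ((p 0)^2 + (p 1)^2)]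

lemma ham_deriv (p : Fin 6 → ℝ) (hq : 0 < Qf p) :
    ∃ L : (Fin 6 → ℝ) →L[ℝ] ℝ, HasFDerivAt Ham L p ∧
      L (Pi.single 0 1) = DX p ∧
      L (Pi.single 1 1) = DY p ∧
      L (Pi.single 2 1) = DZ p ∧
      L (Pi.single 3 1) = PX p ∧
      L (Pi.single 4 1) = PY p ∧
      L (Pi.single 5 1) = -(p 1 / 2) * PX p + (p 0 / 2) * PY p := by
  have h0 := hasFDerivAt_apply (𝕜 := ℝ) 0 p
  have h1 := hasFDerivAt_apply (𝕜 := ℝ) 1 p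
  have h2 := hasFDerivAt_apply (𝕜 := ℝ) 2 p
  have h3 := hasFDerivAt_apply (𝕜 := ℝ) 3 p
  have h4 := hasFDerivAt_apply (𝕜 := ℝ) 4 p
  have h5 := hasFDerivAt_apply (𝕜 := ℝ) 5 p
  have hPX : HasFDerivAt PX _ p := h3.sub ((h1.const_mul (1/2:ℝ)).mul h5)
  have hPY : HasFDerivAt PY _ p := h4.add ((h0.const_mul (1/2:ℝ)).mul h5)
  have h0sq := (hasDerivAt_pow 2 (p 0)).comp_hasFDerivAt p h0
  have h1sq := (hasDerivAt_pow 2 (p 1)).comp_hasFDerivAt p h1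
  have h2sq := (hasDerivAt_pow 2 (p 2)).comp_hasFDerivAt p h2
  have hQ : HasFDerivAt Qf _ p :=
    ((hasDerivAt_pow 2 ((p 0)^2 + (p 1)^2)).comp_hasFDerivAt
      (f := fun q : Fin 6 → ℝ => (q 0)^2 + (q 1)^2) p (h0sq.add h1sq)).add
      (h2sq.const_mul (16:ℝ))
  have hrpow : HasDerivAt (fun s : ℝ => s ^ (-(1/2) : ℝ))
      ((-(1/2):ℝ) * (Qf p) ^ (-(1/2) - 1 : ℝ)) (Qf p) :=
    Real.hasDerivAt_rpow_const (Or.inl hq.ne')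
  have hpot := (hrpow.comp_hasFDerivAt p hQ).const_mul (1/(8*Real.pi) : ℝ)
  have hPXsq := (hasDerivAt_pow 2 (PX p)).comp_hasFDerivAt p hPX
  have hPYsq := (hasDerivAt_pow 2 (PY p)).comp_hasFDerivAt p hPY
  have hkin := (hPXsq.add hPYsq).const_mul (1/2:ℝ)
  have hH : HasFDerivAt Ham _ p := hkin.sub hpot
  refine ⟨_, hH, ?_, ?_, ?_, ?_, ?_, ?_⟩ <;>
  · simp only [ContinuousLinearMap.sub_apply, ContinuousLinearMap.add_apply,
      ContinuousLinearMap.smul_apply, ContinuousLinearMap.coe_smul', Pi.smul_apply,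
      ContinuousLinearMap.proj_apply, smul_eq_mul]
    simp [Pi.single_apply]
    try norm_num [DX, DY, DZ, rQ, PX, PY, Qf]
    try field_simp
    try ring

end KHaux

open KHaux

/-- Every periodic solution of the Kepler–Heisenberg system has zero dilational
momentum `J = x p_x + y p_y + 2 z p_z`. -/
theorem kh_periodic_zero_J (c : ℝ → Fin 6 → ℝ)
    (hc : IsSolutionOn c Set.univ) (T : ℝ) (hT : 0 < T)
    (hper : ∀ t, c (t + T) = c t) :
    ∀ t, Jmom (c t) = 0 := by
  classical
  obtain ⟨-, -, hsol⟩ := hc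
  have hpos : ∀ t, 0 < Qf (c t) := fun t => KHaux.qf_pos (hsol t trivial).1
  -- coordinate derivatives with explicit values
  have hD : ∀ t,
      HasDerivAt (fun τ => c τ 0) (PX (c t)) t ∧
      HasDerivAt (fun τ => c τ 1) (PY (c t)) t ∧
      HasDerivAt (fun τ => c τ 2) (-(c t 1 / 2) * PX (c t) + (c t 0 / 2) * PY (c t)) t ∧
      HasDerivAt (fun τ => c τ 3) (-(DX (c t))) t ∧
      HasDerivAt (fun τ => c τ 4) (-(DY (c t))) t ∧
      HasDerivAt (fun τ => c τ 5) (-(DZ (c t))) t := by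
    intro t
    obtain ⟨L, hL, e0, e1, e2, e3, e4, e5⟩ := KHaux.ham_deriv (c t) (hpos t)
    obtain ⟨-, d0, d1, d2, d3, d4, d5⟩ := hsol t trivial
    rw [hL.fderiv] at d0 d1 d2 d3 d4 d5
    rw [e3] at d0; rw [e4] at d1; rw [e5] at d2
    rw [e0] at d3; rw [e1] at d4; rw [e2] at d5
    exact ⟨d0, d1, d2, d3, d4, d5⟩
  have d0 := fun t => (hD t).1
  have d1 := fun t => (hD t).2.1
  have d2 := fun t => (hD t).2.2.1
  have d3 := fun t => (hD t).2.2.2.1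
  have d4 := fun t => (hD t).2.2.2.2.1
  have d5 := fun t => (hD t).2.2.2.2.2
  -- continuity
  have c0 : Continuous fun t => c t 0 := by
    have h : Differentiable ℝ fun t => c t 0 := fun t => (d0 t).differentiableAt
    exact h.continuous
  have c1 : Continuous fun t => c t 1 := by
    have h : Differentiable ℝ fun t => c t 1 := fun t => (d1 t).differentiableAt
    exact h.continuous
  have c2 : Continuous fun t => c t 2 := by
    have h : Differentiable ℝ fun t => c t 2 := fun t => (d2 t).differentiableAt
    exact h.continuous
  have cQ : Continuous fun t => Qf (c t) := by
    simp only [Qf]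
    exact (((c0.pow 2).add (c1.pow 2)).pow 2).add (continuous_const.mul (c2.pow 2))
  have cR : Continuous fun t => rQ (c t) := by
    simp only [rQ]
    exact cQ.rpow_const (fun t => Or.inl (hpos t).ne')
  -- derivative of Q along the curve
  have hQ' : ∀ t, HasDerivAt (fun τ => Qf (c τ))
      ((2:ℕ) * ((c t 0)^2 + (c t 1)^2) ^ 1 *
          ((2:ℕ) * (c t 0) ^ 1 * PX (c t) + (2:ℕ) * (c t 1) ^ 1 * PY (c t)) +
        16 * ((2:ℕ) * (c t 2) ^ 1 *
          (-(c t 1 / 2) * PX (c t) + (c t 0 / 2) * PY (c t)))) t := by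
    intro t
    have h := ((((d0 t).pow 2).add ((d1 t).pow 2)).pow 2).add (((d2 t).pow 2).const_mul (16:ℝ))
    exact h
  -- energy is conserved
  have hHam' : ∀ t, HasDerivAt (fun τ => Ham (c τ)) 0 t := by
    intro t
    have hpx := (d3 t).sub (((d1 t).const_mul (1/2:ℝ)).mul (d5 t))
    have hpy := (d4 t).add (((d0 t).const_mul (1/2:ℝ)).mul (d5 t))
    have hrpow : HasDerivAt (fun s : ℝ => s ^ (-(1/2) : ℝ))
        ((-(1/2):ℝ) * (Qf (c t)) ^ (-(1/2) - 1 : ℝ)) (Qf (c t)) :=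
      Real.hasDerivAt_rpow_const (Or.inl (hpos t).ne')
    have hpot := (hrpow.comp t (hQ' t)).const_mul (1/(8*Real.pi) : ℝ)
    have hkin := ((hpx.pow 2).add (hpy.pow 2)).const_mul (1/2:ℝ)
    have hh := hkin.sub hpot
    simp only [Function.comp_def] at hh
    simp only [Ham, PX, PY]
    refine hh.congr_deriv ?_
    simp only [DX, DY, DZ, rQ, PX, PY, Pi.sub_apply, Pi.add_apply, Pi.mul_apply]
    have hπ := Real.pi_ne_zero
    field_simp
    ring
  -- derivative of J is 2H
  have hJ' : ∀ t, HasDerivAt (fun τ => Jmom (c τ)) (2 * Ham (c t)) t := by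
    intro t
    have hj := (((d0 t).mul (d3 t)).add ((d1 t).mul (d4 t))).add
      (((d2 t).const_mul (2:ℝ)).mul (d5 t))
    simp only [Jmom]
    refine hj.congr_deriv ?_
    have hrq : Qf (c t) ^ (-(1/2) - 1 : ℝ) * (((c t 0)^2 + (c t 1)^2)^2 + 16*(c t 2)^2)
        = Qf (c t) ^ (-(1/2) : ℝ) := by
      rw [show ((c t 0)^2 + (c t 1)^2)^2 + 16*(c t 2)^2 = Qf (c t) from rfl,
        ← Real.rpow_add_one (hpos t).ne' (-(1/2) - 1)]
      norm_num
    simp only [Ham, DX, DY, DZ, rQ, PX, PY]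
    rw [← hrq]
    have hπ := Real.pi_ne_zero
    field_simp
    ring
  -- derivative of angular momentum L is 0
  have hL' : ∀ t, HasDerivAt (fun τ => c τ 0 * c τ 4 - c τ 1 * c τ 3) 0 t := by
    intro t
    have hl := ((d0 t).mul (d4 t)).sub ((d1 t).mul (d3 t))
    refine hl.congr_deriv ?_
    simp only [DX, DY, DZ, rQ, PX, PY]
    have hπ := Real.pi_ne_zero
    field_simp
    ring
  -- H is constant
  have hHamconst : ∀ t, Ham (c t) = Ham (c 0) := fun t =>
    is_const_of_deriv_eq_zero (fun s => (hHam' s).differentiableAt)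
      (fun s => (hHam' s).deriv) t 0
  -- J is affine with slope 2 H(0)
  have hJaff : ∀ t, Jmom (c t) = Jmom (c 0) + 2 * Ham (c 0) * t := by
    intro t
    have h1 : ∀ s, HasDerivAt (fun τ => Jmom (c τ) - 2 * Ham (c 0) * τ) 0 s := by
      intro s
      have h := (hJ' s).sub ((hasDerivAt_id s).const_mul (2 * Ham (c 0)))
      refine h.congr_deriv ?_
      rw [hHamconst s]; ring
    have h2 := is_const_of_deriv_eq_zero (fun s => (h1 s).differentiableAt)
      (fun s => (h1 s).deriv) t 0
    linarith [h2]
  have hcT : c T = c 0 := by have := hper 0; rwa [zero_add] at this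
  -- energy is zero
  have hE : Ham (c 0) = 0 := by
    have h1 := hJaff T
    rw [hcT] at h1
    have h2 : 2 * Ham (c 0) * T = 0 := by linarith
    rcases mul_eq_zero.mp h2 with h3 | h3
    · rcases mul_eq_zero.mp h3 with h4 | h4
      · norm_num at h4
      · exact h4
    · exact absurd h3 hT.ne'
  -- J and L are constant
  have hJconst : ∀ t, Jmom (c t) = Jmom (c 0) := by
    intro t; rw [hJaff t, hE]; ring
  have hLconst : ∀ t, c t 0 * c t 4 - c t 1 * c t 3 = c 0 0 * c 0 4 - c 0 1 * c 0 3 := fun t =>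
    is_const_of_deriv_eq_zero (fun s => (hL' s).differentiableAt)
      (fun s => (hL' s).deriv) t 0
  -- suffices J(0) = 0
  suffices hz : Jmom (c 0) = 0 by intro t; rw [hJconst t, hz]
  by_contra hJ0
  -- derivative of Q^{-1/2} along the curve, in terms of the constants J0, L0
  have hg' : ∀ t, HasDerivAt (fun τ => (Qf (c τ)) ^ (-(1/2) : ℝ))
      (-2 * rQ (c t) * (Jmom (c 0) * ((c t 0)^2 + (c t 1)^2)
        + 4 * (c 0 0 * c 0 4 - c 0 1 * c 0 3) * c t 2)) t := by
    intro t
    have hrpow : HasDerivAt (fun s : ℝ => s ^ (-(1/2) : ℝ))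
        ((-(1/2):ℝ) * (Qf (c t)) ^ (-(1/2) - 1 : ℝ)) (Qf (c t)) :=
      Real.hasDerivAt_rpow_const (Or.inl (hpos t).ne')
    have h := hrpow.comp t (hQ' t)
    have hbase : HasDerivAt (fun τ => (Qf (c τ)) ^ (-(1/2) : ℝ))
        (-2 * rQ (c t) * (Jmom (c t) * ((c t 0)^2 + (c t 1)^2)
          + 4 * (c t 0 * c t 4 - c t 1 * c t 3) * c t 2)) t := by
      refine h.congr_deriv ?_
      simp only [Jmom, rQ, PX, PY]
      ring
    rw [hJconst t, hLconst t] at hbase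
    exact hbase
  -- integrability helpers
  have cphi : Continuous fun τ => rQ (c τ) * ((c τ 0)^2 + (c τ 1)^2) :=
    cR.mul ((c0.pow 2).add (c1.pow 2))
  have cz : Continuous fun τ => rQ (c τ) * c τ 2 := cR.mul c2
  -- ∫ z Q^{-3/2} = 0 from periodicity of p_z
  have intz : ∫ τ in (0:ℝ)..T, rQ (c τ) * c τ 2 = 0 := by
    have hder : ∀ τ ∈ Set.uIcc (0:ℝ) T, HasDerivAt (fun τ => c τ 5) (-(DZ (c τ))) τ :=
      fun τ _ => d5 τ
    have hcont : Continuous fun τ => -(DZ (c τ)) := by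
      simp only [DZ]
      exact (((continuous_const.mul c2).div_const Real.pi).mul cR).neg
    have h := intervalIntegral.integral_eq_sub_of_hasDerivAt hder
      (hcont.intervalIntegrable 0 T)
    rw [hcT, sub_self] at h
    have heq : (fun τ => -(DZ (c τ))) = fun τ => (-2/Real.pi) * (rQ (c τ) * c τ 2) := by
      funext τ
      simp only [DZ]
      ring
    rw [heq, intervalIntegral.integral_const_mul] at h
    rcases mul_eq_zero.mp h with h' | h'
    · exact absurd h' (div_ne_zero (by norm_num) Real.pi_ne_zero)
    · exact h'
  -- ∫ (J0 s + 4 L0 z) Q^{-3/2} = 0 from periodicity of Q^{-1/2}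
  have intg : (-2 * Jmom (c 0)) * (∫ τ in (0:ℝ)..T, rQ (c τ) * ((c τ 0)^2 + (c τ 1)^2))
      + (-8 * (c 0 0 * c 0 4 - c 0 1 * c 0 3)) * (∫ τ in (0:ℝ)..T, rQ (c τ) * c τ 2) = 0 := by
    have hder : ∀ τ ∈ Set.uIcc (0:ℝ) T, HasDerivAt (fun τ => (Qf (c τ)) ^ (-(1/2) : ℝ))
        (-2 * rQ (c τ) * (Jmom (c 0) * ((c τ 0)^2 + (c τ 1)^2)
          + 4 * (c 0 0 * c 0 4 - c 0 1 * c 0 3) * c τ 2)) τ := fun τ _ => hg' τ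
    have hcont : Continuous fun τ => -2 * rQ (c τ) * (Jmom (c 0) * ((c τ 0)^2 + (c τ 1)^2)
        + 4 * (c 0 0 * c 0 4 - c 0 1 * c 0 3) * c τ 2) :=
      (continuous_const.mul cR).mul ((continuous_const.mul ((c0.pow 2).add (c1.pow 2))).add
        (continuous_const.mul c2))
    have h := intervalIntegral.integral_eq_sub_of_hasDerivAt hder
      (hcont.intervalIntegrable 0 T)
    rw [hcT, sub_self] at h
    have heq : (fun τ => -2 * rQ (c τ) * (Jmom (c 0) * ((c τ 0)^2 + (c τ 1)^2)
        + 4 * (c 0 0 * c 0 4 - c 0 1 * c 0 3) * c τ 2))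
        = fun τ => (-2 * Jmom (c 0)) * (rQ (c τ) * ((c τ 0)^2 + (c τ 1)^2))
          + (-8 * (c 0 0 * c 0 4 - c 0 1 * c 0 3)) * (rQ (c τ) * c τ 2) := by
      funext τ; ring
    rw [heq] at h
    rw [intervalIntegral.integral_add
        (f := fun τ => (-2 * Jmom (c 0)) * (rQ (c τ) * ((c τ 0)^2 + (c τ 1)^2)))
        (g := fun τ => (-8 * (c 0 0 * c 0 4 - c 0 1 * c 0 3)) * (rQ (c τ) * c τ 2))
        ((continuous_const.mul cphi).intervalIntegrable 0 T)
        ((continuous_const.mul cz).intervalIntegrable 0 T),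
      intervalIntegral.integral_const_mul, intervalIntegral.integral_const_mul] at h
    exact h
  have intphi : ∫ τ in (0:ℝ)..T, rQ (c τ) * ((c τ 0)^2 + (c τ 1)^2) = 0 := by
    rw [intz, mul_zero, add_zero] at intg
    rcases mul_eq_zero.mp intg with h' | h'
    · exact absurd h' (by simpa using hJ0)
    · exact h'
  -- the integrand is nonnegative and continuous, hence vanishes on (0,T)
  have hrpos : ∀ τ, 0 < rQ (c τ) := fun τ => Real.rpow_pos_of_pos (hpos τ) _
  have hnonneg : ∀ τ, 0 ≤ rQ (c τ) * ((c τ 0)^2 + (c τ 1)^2) :=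
    fun τ => mul_nonneg (hrpos τ).le (by positivity)
  have hvanish : ∀ τ ∈ Set.Ioo (0:ℝ) T, rQ (c τ) * ((c τ 0)^2 + (c τ 1)^2) = 0 := by
    intro τ0 hτ0
    by_contra hne
    have hp0 : 0 < rQ (c τ0) * ((c τ0 0)^2 + (c τ0 1)^2) :=
      lt_of_le_of_ne (hnonneg τ0) (Ne.symm hne)
    have hopen : IsOpen {x : ℝ | 0 < rQ (c x) * ((c x 0)^2 + (c x 1)^2)} :=
      isOpen_lt continuous_const cphi
    obtain ⟨a, b, ⟨ha, hb⟩, hsub⟩ :=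
      mem_nhds_iff_exists_Ioo_subset.mp (hopen.mem_nhds hp0)
    set a' := max a 0 with ha'def
    set b' := min b T with hb'def
    have ha' : a' < τ0 := max_lt ha hτ0.1
    have hb' : τ0 < b' := lt_min hb hτ0.2
    have hmono : Set.Ioo a' b' ⊆ Set.Ioo a b :=
      Set.Ioo_subset_Ioo (le_max_left a 0) (min_le_left b T)
    have hposint : 0 < ∫ τ in a'..b', rQ (c τ) * ((c τ 0)^2 + (c τ 1)^2) :=
      intervalIntegral.intervalIntegral_pos_of_pos_on (cphi.intervalIntegrable a' b')
        (fun x hx => hsub (hmono hx)) (ha'.trans hb')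
    have h0a : 0 ≤ ∫ τ in (0:ℝ)..a', rQ (c τ) * ((c τ 0)^2 + (c τ 1)^2) :=
      intervalIntegral.integral_nonneg (le_max_right a 0) (fun u _ => hnonneg u)
    have hbT : 0 ≤ ∫ τ in b'..T, rQ (c τ) * ((c τ 0)^2 + (c τ 1)^2) :=
      intervalIntegral.integral_nonneg (min_le_right b T) (fun u _ => hnonneg u)
    have e1 := intervalIntegral.integral_add_adjacent_intervals
      (cphi.intervalIntegrable (μ := MeasureTheory.volume) 0 a')
      (cphi.intervalIntegrable (μ := MeasureTheory.volume) a' b')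
    have e2 := intervalIntegral.integral_add_adjacent_intervals
      (cphi.intervalIntegrable (μ := MeasureTheory.volume) 0 b')
      (cphi.intervalIntegrable (μ := MeasureTheory.volume) b' T)
    rw [intphi] at e2
    linarith
  -- hence x and y vanish on (0,T)
  have hxy : ∀ τ ∈ Set.Ioo (0:ℝ) T, c τ 0 = 0 ∧ c τ 1 = 0 := by
    intro τ hτ
    have h := hvanish τ hτ
    have hs : (c τ 0)^2 + (c τ 1)^2 = 0 := by
      rcases mul_eq_zero.mp h with h' | h'
      · exact absurd h' (hrpos τ).ne'
      · exact h'
    constructor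
    · have : (c τ 0)^2 = 0 := by nlinarith [sq_nonneg (c τ 0), sq_nonneg (c τ 1)]
      exact pow_eq_zero_iff (n := 2) (by norm_num) |>.mp this
    · have : (c τ 1)^2 = 0 := by nlinarith [sq_nonneg (c τ 0), sq_nonneg (c τ 1)]
      exact pow_eq_zero_iff (n := 2) (by norm_num) |>.mp this
  -- at t₁ = T/2: P_X = P_Y = 0, so H < 0, contradicting H = 0
  have ht1 : T/2 ∈ Set.Ioo (0:ℝ) T := ⟨by linarith, by linarith⟩
  have hev0 : (fun τ => c τ 0) =ᶠ[nhds (T/2)] fun _ => (0:ℝ) :=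
    Filter.eventuallyEq_of_mem (isOpen_Ioo.mem_nhds ht1) (fun τ hτ => (hxy τ hτ).1)
  have hev1 : (fun τ => c τ 1) =ᶠ[nhds (T/2)] fun _ => (0:ℝ) :=
    Filter.eventuallyEq_of_mem (isOpen_Ioo.mem_nhds ht1) (fun τ hτ => (hxy τ hτ).2)
  have hPX0 : PX (c (T/2)) = 0 :=
    (d0 (T/2)).unique ((hasDerivAt_const (T/2) (0:ℝ)).congr_of_eventuallyEq hev0)
  have hPY0 : PY (c (T/2)) = 0 :=
    (d1 (T/2)).unique ((hasDerivAt_const (T/2) (0:ℝ)).congr_of_eventuallyEq hev1)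
  have hH2 : Ham (c (T/2)) = 0 := by rw [hHamconst (T/2), hE]
  have hw : 0 < Qf (c (T/2)) ^ (-(1/2) : ℝ) := Real.rpow_pos_of_pos (hpos (T/2)) _
  have hval : Ham (c (T/2)) = -((1/(8*Real.pi)) * Qf (c (T/2)) ^ (-(1/2) : ℝ)) := by
    simp only [Ham, hPX0, hPY0]
    ring
  have hππ : 0 < 1/(8*Real.pi) := by positivity
  nlinarith [hw, hππ, hval, hH2]
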